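/- The sharp bound |Ω|^{2/N} μ₂(Ω) ≤ μ₂* = 2^{2/N}|B|^{2/N}μ₁(B) implies the Pólya conjecture for k = 2: for every bounded regular (Lipschitz) open set Ω ⊂ R^N, μ₂(Ω) ≤ 4π² (2/(ω_N |Ω|))^{2/N}. Equivalently, one must verify the numerical inequality 2^{2/N} ω_N^{2/N} μ₁(B₁) ≤ 4π² (2/ω_N)^{2/N}, i.e. μ₁(B₁) ≤ 4π²/ω_N^{4/N}, where B₁ is the unit ball and ω_N = |B₁|. -/

import Mathlib

open MeasureTheory Metric Real

/-- Variational (min-max) definition of the `k`-th Neumann eigenvalue of a domain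
`Ω ⊂ ℝ^N` (counting `μ₀ = 0`). -/
noncomputable def neumannEV {N : ℕ} (Ω : Set (EuclideanSpace ℝ (Fin N))) (k : ℕ) : ℝ :=
  sInf { m : ℝ | 0 ≤ m ∧
    ∃ S : Submodule ℝ (EuclideanSpace ℝ (Fin N) → ℝ),
      Module.finrank ℝ S = k ∧
      (∀ u ∈ S, ContDiff ℝ 1 u ∧ (∫ x in Ω, u x) = 0) ∧
      (∀ u ∈ S, (∫ x in Ω, ‖fderiv ℝ u x‖ ^ 2) ≤ m * ∫ x in Ω, (u x) ^ 2) }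

/-- the sharp bound `|Ω|^{2/N}μ₂(Ω) ≤ μ₂* = 2^{2/N}ω_N^{2/N}μ₁(B₁)`,
together with the numerical inequality `μ₁(B₁) ≤ 4π²/ω_N^{4/N}` (Pólya for `k = 1`
on the ball), implies the Pólya conjecture for `k = 2`:
`μ₂(Ω) ≤ 4π²(2/(ω_N|Ω|))^{2/N}` for every bounded regular open `Ω ⊂ ℝ^N`. -/
theorem stmt12 {N : ℕ} (hN : 1 ≤ N)
    (hmain : ∀ Ω : Set (EuclideanSpace ℝ (Fin N)),
      IsOpen Ω → Bornology.IsBounded Ω → Ω.Nonempty →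
      (volume Ω).toReal ^ ((2 : ℝ) / N) * neumannEV Ω 2 ≤
        2 ^ ((2 : ℝ) / N) *
          (volume (ball (0 : EuclideanSpace ℝ (Fin N)) 1)).toReal ^ ((2 : ℝ) / N) *
          neumannEV (ball (0 : EuclideanSpace ℝ (Fin N)) 1) 1)
    (hnum : neumannEV (ball (0 : EuclideanSpace ℝ (Fin N)) 1) 1 ≤
      4 * π ^ 2 /
        (volume (ball (0 : EuclideanSpace ℝ (Fin N)) 1)).toReal ^ ((4 : ℝ) / N)) :
    ∀ Ω : Set (EuclideanSpace ℝ (Fin N)),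
      IsOpen Ω → Bornology.IsBounded Ω → Ω.Nonempty →
      neumannEV Ω 2 ≤
        4 * π ^ 2 *
          (2 / ((volume (ball (0 : EuclideanSpace ℝ (Fin N)) 1)).toReal *
            (volume Ω).toReal)) ^ ((2 : ℝ) / N) := by
  intro Ω hO hB hne
  set w := (volume (ball (0 : EuclideanSpace ℝ (Fin N)) 1)).toReal with hwdef
  set a := (volume Ω).toReal with hadef
  have ha : 0 < a :=
    ENNReal.toReal_pos (hO.measure_pos volume hne).ne' hB.measure_lt_top.ne
  have hw0 : 0 < w :=
    ENNReal.toReal_pos (measure_ball_pos volume (0 : EuclideanSpace ℝ (Fin N)) one_pos).ne'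
      measure_ball_lt_top.ne
  have key := hmain Ω hO hB hne
  have hfac : (0:ℝ) ≤ 2 ^ ((2:ℝ)/N) * w ^ ((2:ℝ)/N) := by positivity
  have step : a ^ ((2:ℝ)/N) * neumannEV Ω 2 ≤
      2 ^ ((2:ℝ)/N) * w ^ ((2:ℝ)/N) * (4 * π ^ 2 / w ^ ((4:ℝ)/N)) :=
    key.trans (mul_le_mul_of_nonneg_left hnum hfac)
  have hapow : (0:ℝ) < a ^ ((2:ℝ)/N) := Real.rpow_pos_of_pos ha _
  have heq : 4 * π ^ 2 * (2 / (w * a)) ^ ((2:ℝ)/N) =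
      2 ^ ((2:ℝ)/N) * w ^ ((2:ℝ)/N) * (4 * π ^ 2 / w ^ ((4:ℝ)/N)) / a ^ ((2:ℝ)/N) := by
    have h1 : ((2:ℝ) / (w * a)) ^ ((2:ℝ)/N) =
        2 ^ ((2:ℝ)/N) / (w ^ ((2:ℝ)/N) * a ^ ((2:ℝ)/N)) := by
      rw [Real.div_rpow (by norm_num) (by positivity),
        Real.mul_rpow hw0.le ha.le]
    have h2 : w ^ ((4:ℝ)/N) = w ^ ((2:ℝ)/N) * w ^ ((2:ℝ)/N) := by
      rw [← Real.rpow_add hw0]; ring_nf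
    have hwpow : (0:ℝ) < w ^ ((2:ℝ)/N) := Real.rpow_pos_of_pos hw0 _
    rw [h1, h2]
    field_simp
  rw [heq, le_div_iff₀ hapow]
  linarith [step]
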